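/- Let F : ℝ^p → ℝ be convex, differentiable and β_F-smooth over ℝ^p, with a minimizer x_* over ℝ^p. Let (e_t)_{t≥0} be arbitrary vectors in ℝ^p and define iterates x_{t+1} = x_t − (1/β_F)(∇F(x_t) + e_t) starting from an arbitrary x₀ ∈ ℝ^p. For t ≥ 1 let a_t = Σ_{i=1}^t ‖e_{i−1}‖₂/β_F. Then for every t ≥ 1: F(x_t) − F(x_*) ≤ [ (β_F/2)‖x₀ − x_*‖₂² + (2a_t + ‖x₀ − x_*‖₂)·( β_F·a_t + 2·Σ_{i=2}^t (i−1)‖e_{i−1}‖₂ ) ] / t. -/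

import Mathlib

set_option maxHeartbeats 1000000


open scoped RealInnerProductSpace

lemma aux_grad_ineq {p : ℕ} {F : EuclideanSpace ℝ (Fin p) → ℝ}
    (hFconv : ConvexOn ℝ Set.univ F) (hFdiff : Differentiable ℝ F)
    (u v : EuclideanSpace ℝ (Fin p)) :
    F u - F v ≤ ⟪gradient F u, u - v⟫ := by
  have hc : HasDerivAt (fun s : ℝ => u + s • (v - u)) (v - u) 0 := by
    simpa using ((hasDerivAt_id (0:ℝ)).smul_const (v - u)).const_add u
  have hF' := (hFdiff (u + (0:ℝ) • (v - u))).hasGradientAt.hasFDerivAt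
  have hcomp := hF'.comp_hasDerivAt (0:ℝ) hc
  have h0 : u + (0:ℝ) • (v - u) = u := by simp
  rw [h0] at hcomp
  have hderiv : HasDerivAt (fun s : ℝ => F (u + s • (v - u))) ⟪gradient F u, v - u⟫ 0 := by
    have hc2 : HasDerivAt (fun s : ℝ => F (u + s • (v - u))) _ 0 := hcomp
    simpa [Function.comp, InnerProductSpace.toDual_apply_apply] using hc2
  have T := hasDerivAt_iff_tendsto_slope.mp hderiv
  have T' : Filter.Tendsto (slope (fun s : ℝ => F (u + s • (v - u))) 0)
      (nhdsWithin 0 (Set.Ioi 0)) (nhds ⟪gradient F u, v - u⟫) :=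
    T.mono_left (nhdsWithin_mono 0 fun s hs => Set.mem_compl_singleton_iff.mpr (ne_of_gt hs))
  have hbound : ∀ᶠ s in nhdsWithin (0:ℝ) (Set.Ioi 0),
      slope (fun s : ℝ => F (u + s • (v - u))) 0 s ≤ F v - F u := by
    filter_upwards [Ioc_mem_nhdsGT_of_mem (Set.mem_Ico.mpr ⟨le_refl (0:ℝ), one_pos⟩)] with s hs
    obtain ⟨hs0, hs1⟩ := hs
    have hcv := hFconv.2 (Set.mem_univ u) (Set.mem_univ v)
      (by linarith : (0:ℝ) ≤ 1 - s) hs0.le (by ring)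
    have hpt : (1 - s) • u + s • v = u + s • (v - u) := by module
    rw [hpt] at hcv
    simp only [smul_eq_mul] at hcv
    rw [slope_def_field]
    simp only [zero_smul, add_zero, sub_zero]
    rw [div_le_iff₀ hs0]
    nlinarith [hcv]
  have hL := le_of_tendsto T' hbound
  have hflip : ⟪gradient F u, u - v⟫ = -⟪gradient F u, v - u⟫ := by
    rw [← inner_neg_right, neg_sub]
  rw [hflip]
  linarith

lemma aux_double_sum (c : ℕ → ℝ) (n : ℕ) :
    ∑ i ∈ Finset.range n, ∑ j ∈ Finset.Ico (i+1) n, c j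
      = ∑ j ∈ Finset.range n, (j:ℝ) * c j := by
  induction n with
  | zero => simp
  | succ n ih =>
    rw [Finset.sum_range_succ, Finset.sum_range_succ, Finset.Ico_self, Finset.sum_empty, add_zero]
    have hcg : ∀ i ∈ Finset.range n, ∑ j ∈ Finset.Ico (i+1) (n+1), c j
        = (∑ j ∈ Finset.Ico (i+1) n, c j) + c n := by
      intro i hi
      exact Finset.sum_Ico_succ_top (Finset.mem_range.mp hi) c
    rw [Finset.sum_congr rfl hcg, Finset.sum_add_distrib, ih, Finset.sum_const,
      Finset.card_range, nsmul_eq_mul]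

/-- Convergence of inexact gradient descent with arbitrary additive gradient errors for
a convex, `β_F`-smooth function (Lemma `Inexact_GD_lemma` in the paper, adapted from
Schmidt et al. 2011):
`F(x_t) − F(x_*) ≤ [(β_F/2)‖x₀ − x_*‖² + (2a_t + ‖x₀ − x_*‖)(β_F·a_t +
2·Σ_{i=2}^t (i−1)‖e_{i−1}‖)] / t`, where `a_t = Σ_{i=1}^t ‖e_{i−1}‖/β_F`. -/
theorem stmt_12 {p : ℕ} (βF : ℝ) (hβF : 0 < βF)
    (F : EuclideanSpace ℝ (Fin p) → ℝ)
    (hFconv : ConvexOn ℝ Set.univ F) (hFdiff : Differentiable ℝ F)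
    (hsm : ∀ a b : EuclideanSpace ℝ (Fin p),
      F a - F b - ⟪gradient F b, a - b⟫ ≤ βF / 2 * ‖a - b‖ ^ 2)
    (xstar : EuclideanSpace ℝ (Fin p)) (hmin : ∀ y, F xstar ≤ F y)
    (e x : ℕ → EuclideanSpace ℝ (Fin p))
    (hstep : ∀ t : ℕ, x (t + 1) = x t - (1 / βF) • (gradient F (x t) + e t)) :
    ∀ t : ℕ, 1 ≤ t →
      F (x t) - F xstar ≤
        (βF / 2 * ‖x 0 - xstar‖ ^ 2 +
          (2 * ((∑ i ∈ Finset.range t, ‖e i‖) / βF) + ‖x 0 - xstar‖) *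
            (βF * ((∑ i ∈ Finset.range t, ‖e i‖) / βF) +
              2 * ∑ i ∈ Finset.range t, (i : ℝ) * ‖e i‖)) / t := by
  intro t ht
  have hβ0 : (βF:ℝ) ≠ 0 := ne_of_gt hβF
  have hcpos : (0:ℝ) < 1/βF := by positivity
  have key : ∀ u v, F u - F v ≤ ⟪gradient F u, u - v⟫ := aux_grad_ineq hFconv hFdiff
  -- gradient lower bound
  have glb : ∀ u, (1/βF) * ‖gradient F u‖^2 ≤ 2*(F u - F xstar) := by
    intro u
    have h1 := hsm (u - (1/βF) • gradient F u) u
    have h2 := hmin (u - (1/βF) • gradient F u)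
    have ha : u - (1/βF) • gradient F u - u = -((1/βF) • gradient F u) := by abel
    rw [ha, inner_neg_right, real_inner_smul_right, real_inner_self_eq_norm_sq,
      norm_neg, norm_smul, Real.norm_eq_abs, abs_of_pos hcpos] at h1
    have e1 : βF/2 * ((1/βF) * ‖gradient F u‖)^2 = (1/βF) * ‖gradient F u‖^2/2 := by
      field_simp
    rw [e1] at h1
    linarith
  -- smoothness per-step bound
  have stepA : ∀ i, F (x (i+1)) ≤ F (x i)
      - (1/βF) * ‖gradient F (x i)‖^2/2 + (1/βF) * ‖e i‖^2/2 := by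
    intro i
    have hstep' : x (i+1) - x i = -((1/βF) • (gradient F (x i) + e i)) := by
      rw [hstep i]; abel
    have h1 := hsm (x (i+1)) (x i)
    have hinner : ⟪gradient F (x i), x (i+1) - x i⟫
        = -((1/βF) * ‖gradient F (x i)‖^2 + (1/βF) * ⟪gradient F (x i), e i⟫) := by
      rw [hstep', inner_neg_right, real_inner_smul_right, inner_add_right,
        real_inner_self_eq_norm_sq]
      ring
    have hnorm : ‖x (i+1) - x i‖^2
        = (1/βF)^2 * (‖gradient F (x i)‖^2 + 2*⟪gradient F (x i), e i⟫ + ‖e i‖^2) := by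
      rw [hstep', norm_neg, norm_smul, mul_pow, Real.norm_eq_abs, sq_abs, ← norm_add_sq_real]
    rw [hinner, hnorm] at h1
    have e1 : βF/2 * ((1/βF)^2 * (‖gradient F (x i)‖^2 + 2*⟪gradient F (x i), e i⟫ + ‖e i‖^2))
        = (1/βF) * ‖gradient F (x i)‖^2/2 + (1/βF) * ⟪gradient F (x i), e i⟫
          + (1/βF) * ‖e i‖^2/2 := by
      field_simp
    rw [e1] at h1
    linarith
  -- telescoping per-step bound
  have stepB : ∀ i, F (x (i+1)) - F xstar ≤
      βF/2 * (‖x i - xstar‖^2 - ‖x (i+1) - xstar‖^2) + ‖e i‖ * ‖x (i+1) - xstar‖ := by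
    intro i
    have hd' : x (i+1) - xstar = (x i - xstar) - (1/βF) • (gradient F (x i) + e i) := by
      rw [hstep i]; abel
    have h1 := key (x i) xstar
    have h2 := stepA i
    have hnd : ‖x (i+1) - xstar‖^2 = ‖x i - xstar‖^2
        - 2*(1/βF)*⟪gradient F (x i), x i - xstar⟫ - 2*(1/βF)*⟪e i, x i - xstar⟫
        + (1/βF)^2*‖gradient F (x i)‖^2 + (1/βF)^2*(2*⟪gradient F (x i), e i⟫)
        + (1/βF)^2*‖e i‖^2 := by
      rw [hd', norm_sub_sq_real, real_inner_smul_right, inner_add_right, norm_smul,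
        Real.norm_eq_abs, mul_pow, sq_abs, norm_add_sq_real,
        real_inner_comm (x i - xstar) (gradient F (x i)),
        real_inner_comm (x i - xstar) (e i)]
      ring
    have hied : ⟪e i, x (i+1) - xstar⟫ = ⟪e i, x i - xstar⟫
        - (1/βF)*⟪gradient F (x i), e i⟫ - (1/βF)*‖e i‖^2 := by
      rw [hd', inner_sub_right, real_inner_smul_right, inner_add_right,
        real_inner_comm (e i) (gradient F (x i)), real_inner_self_eq_norm_sq]
      ring
    have hcs : -(‖e i‖ * ‖x (i+1) - xstar‖) ≤ ⟪e i, x (i+1) - xstar⟫ := by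
      have h3 := abs_real_inner_le_norm (e i) (x (i+1) - xstar)
      have h4 := neg_abs_le ⟪e i, x (i+1) - xstar⟫
      linarith
    have hexp : βF/2 * (‖x i - xstar‖^2 - ‖x (i+1) - xstar‖^2)
        = ⟪gradient F (x i), x i - xstar⟫ + ⟪e i, x i - xstar⟫
          - (1/βF)*‖gradient F (x i)‖^2/2 - (1/βF)*⟪gradient F (x i), e i⟫
          - (1/βF)*‖e i‖^2/2 := by
      rw [hnd]; field_simp; ring
    rw [hied] at hcs
    linarith
  -- nonexpansiveness
  have stepC : ∀ i, ‖x (i+1) - xstar‖ ≤ ‖x i - xstar‖ + (1/βF) * ‖e i‖ := by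
    intro i
    have hd' : x (i+1) - xstar
        = (x i - (1/βF) • gradient F (x i) - xstar) - (1/βF) • e i := by
      rw [hstep i, smul_add]; abel
    have htri : ‖x (i+1) - xstar‖
        ≤ ‖x i - (1/βF) • gradient F (x i) - xstar‖ + ‖(1/βF) • e i‖ := by
      rw [hd']; exact norm_sub_le _ _
    have hse : ‖(1/βF) • e i‖ = (1/βF) * ‖e i‖ := by
      rw [norm_smul, Real.norm_eq_abs, abs_of_pos hcpos]
    have hsq : ‖x i - (1/βF) • gradient F (x i) - xstar‖^2 ≤ ‖x i - xstar‖^2 := by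
      have h1 := key (x i) xstar
      have h2 := glb (x i)
      have hre : x i - (1/βF) • gradient F (x i) - xstar
          = (x i - xstar) - (1/βF) • gradient F (x i) := by abel
      have hexp : ‖x i - (1/βF) • gradient F (x i) - xstar‖^2
          = ‖x i - xstar‖^2 - 2*(1/βF)*⟪gradient F (x i), x i - xstar⟫
            + (1/βF)^2*‖gradient F (x i)‖^2 := by
        rw [hre, norm_sub_sq_real, real_inner_smul_right, norm_smul, Real.norm_eq_abs,
          mul_pow, sq_abs, real_inner_comm (x i - xstar) (gradient F (x i))]
        ring
      have h3 : (1/βF) * ((1/βF) * ‖gradient F (x i)‖^2)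
          ≤ (1/βF) * (2*⟪gradient F (x i), x i - xstar⟫) :=
        mul_le_mul_of_nonneg_left (by linarith) (le_of_lt hcpos)
      rw [hexp]
      nlinarith [h3]
    have hle : ‖x i - (1/βF) • gradient F (x i) - xstar‖ ≤ ‖x i - xstar‖ := by
      have := Real.sqrt_le_sqrt hsq
      rwa [Real.sqrt_sq (norm_nonneg _), Real.sqrt_sq (norm_nonneg _)] at this
    rw [hse] at htri
    linarith
  -- distance bound
  have hdist : ∀ i, ‖x i - xstar‖ ≤ ‖x 0 - xstar‖ + (1/βF) * ∑ k ∈ Finset.range i, ‖e k‖ := by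
    intro i
    induction i with
    | zero => simp
    | succ n ih =>
      have := stepC n
      rw [Finset.sum_range_succ, mul_add]
      linarith
  have hdist' : ∀ i ∈ Finset.range t, ‖x (i+1) - xstar‖
      ≤ ‖x 0 - xstar‖ + (1/βF) * ∑ k ∈ Finset.range t, ‖e k‖ := by
    intro i hi
    have h1 := hdist (i+1)
    have h2 : ∑ k ∈ Finset.range (i+1), ‖e k‖ ≤ ∑ k ∈ Finset.range t, ‖e k‖ :=
      Finset.sum_le_sum_of_subset_of_nonneg
        (Finset.range_subset_range.mpr (Finset.mem_range.mp hi)) (fun _ _ _ => norm_nonneg _)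
    have h3 := mul_le_mul_of_nonneg_left h2 (le_of_lt hcpos)
    linarith
  set D := ‖x 0 - xstar‖ with hD
  set Esum := ∑ i ∈ Finset.range t, ‖e i‖ with hEsum
  set S := ∑ i ∈ Finset.range t, (i:ℝ) * ‖e i‖ with hS
  have hE0 : (0:ℝ) ≤ Esum := Finset.sum_nonneg fun i _ => norm_nonneg _
  have hS0 : (0:ℝ) ≤ S := Finset.sum_nonneg fun i _ =>
    mul_nonneg (Nat.cast_nonneg _) (norm_nonneg _)
  have hD0 : (0:ℝ) ≤ D := norm_nonneg _
  clear_value D Esum S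
  -- sum of stepB
  have hsumB : ∑ i ∈ Finset.range t, (F (x (i+1)) - F xstar)
      ≤ βF/2 * D^2 + Esum * (D + (1/βF) * Esum) := by
    have h1 : ∑ i ∈ Finset.range t, (F (x (i+1)) - F xstar)
        ≤ ∑ i ∈ Finset.range t, (βF/2 * (‖x i - xstar‖^2 - ‖x (i+1) - xstar‖^2)
            + ‖e i‖ * (D + (1/βF) * Esum)) := by
      apply Finset.sum_le_sum
      intro i hi
      have h2 := stepB i
      have h3 := mul_le_mul_of_nonneg_left (hdist' i hi) (norm_nonneg (e i))
      linarith
    rw [Finset.sum_add_distrib, ← Finset.mul_sum, Finset.sum_range_sub'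
      (f := fun i => ‖x i - xstar‖^2), ← Finset.sum_mul] at h1
    have h4 : βF/2 * (‖x 0 - xstar‖^2 - ‖x t - xstar‖^2) ≤ βF/2 * D^2 := by
      rw [← hD]
      nlinarith [sq_nonneg ‖x t - xstar‖, hβF]
    rw [← hEsum] at h1
    linarith
  -- monotone-ish bound
  have hmono : ∀ m n : ℕ, m ≤ n → F (x n) ≤ F (x m)
      + ∑ j ∈ Finset.Ico m n, (1/βF) * ‖e j‖^2/2 := by
    intro m n h
    induction n, h using Nat.le_induction with
    | base => simp
    | succ n hmn ih =>
      have hA := stepA n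
      rw [Finset.sum_Ico_succ_top hmn]
      have hg : (0:ℝ) ≤ (1/βF) * ‖gradient F (x n)‖^2/2 := by positivity
      linarith
  have hfin : (t:ℝ) * (F (x t) - F xstar)
      ≤ (∑ i ∈ Finset.range t, (F (x (i+1)) - F xstar))
        + ∑ j ∈ Finset.range t, (j:ℝ) * ((1/βF) * ‖e j‖^2/2) := by
    rw [← aux_double_sum (fun j => (1/βF) * ‖e j‖^2/2) t]
    have hconst : (t:ℝ) * (F (x t) - F xstar)
        = ∑ _i ∈ Finset.range t, (F (x t) - F xstar) := by
      rw [Finset.sum_const, Finset.card_range, nsmul_eq_mul]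
    rw [hconst, ← Finset.sum_add_distrib]
    apply Finset.sum_le_sum
    intro i hi
    have := hmono (i+1) t (Finset.mem_range.mp hi)
    linarith
  have hS2 : ∑ j ∈ Finset.range t, (j:ℝ) * ((1/βF) * ‖e j‖^2/2)
      ≤ ((1/βF) * Esum/2) * S := by
    rw [hS, Finset.mul_sum]
    apply Finset.sum_le_sum
    intro j hj
    have h1 : ‖e j‖ ≤ Esum := hEsum ▸
      Finset.single_le_sum (f := fun k => ‖e k‖) (fun k _ => norm_nonneg (e k)) hj
    have h2 : ‖e j‖^2 ≤ Esum * ‖e j‖ := by nlinarith [norm_nonneg (e j)]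
    have h3 := mul_le_mul_of_nonneg_left h2
      (show (0:ℝ) ≤ (j:ℝ) * (1/βF)/2 by positivity)
    nlinarith [h3]
  have hfinal : (t:ℝ) * (F (x t) - F xstar)
      ≤ βF/2 * D^2 + Esum * (D + (1/βF) * Esum) + ((1/βF) * Esum/2) * S := by
    linarith
  have htpos : (0:ℝ) < t := by exact_mod_cast ht
  rw [le_div_iff₀ htpos]
  have hβ' : βF * (Esum/βF) = Esum := by field_simp
  rw [hβ']
  have hid : βF/2*D^2 + (2*(Esum/βF) + D) * (Esum + 2*S)
      - (βF/2*D^2 + Esum*(D + (1/βF)*Esum) + ((1/βF)*Esum/2)*S)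
      = Esum^2/βF + 7/2*(Esum*S/βF) + 2*(D*S) := by
    field_simp; ring
  have h1 : (0:ℝ) ≤ Esum^2/βF := by positivity
  have h2 : (0:ℝ) ≤ Esum*S/βF := by positivity
  have h3 : (0:ℝ) ≤ D*S := mul_nonneg hD0 hS0
  nlinarith [hfinal, hid, h1, h2, h3]
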